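/- Let A, B ∈ ℂ[τ] and let i ∈ ℂ with i² = −1. The following are equivalent: (1) A(iτ) = A(τ) and B(iτ) = −B(τ) as polynomials, and for all τ₀ ∈ ℂ ∖ {0}, A(τ₀) = τ₀⁸·A(1/τ₀) and B(τ₀) = τ₀¹²·B(1/τ₀); (2) there exist a, b, c, d ∈ ℂ such that A = a·(τ⁸ + 1) + b·τ⁴ and B = c·(τ¹⁰ + τ²) + d·τ⁶. -/

import Mathlib

open Polynomial

/-- For `A, B ∈ ℂ[τ]` and `i ∈ ℂ` with `i² = −1`, the following are
equivalent: (1) `A(iτ) = A(τ)`, `B(iτ) = −B(τ)` as polynomials, and for all `τ₀ ≠ 0`,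
`A(τ₀) = τ₀⁸·A(1/τ₀)` and `B(τ₀) = τ₀¹²·B(1/τ₀)`; (2) there exist `a, b, c, d ∈ ℂ` with
`A = a(τ⁸+1) + bτ⁴` and `B = c(τ¹⁰+τ²) + dτ⁶`. -/
lemma coeff_comp_CiX (p : Polynomial ℂ) (c : ℂ) (n : ℕ) :
    (p.comp (C c * X)).coeff n = c ^ n * p.coeff n := by
  induction p using Polynomial.induction_on' with
  | add p q hp hq => simp [hp, hq, mul_add]
  | monomial m a =>
    rw [monomial_comp, mul_pow, ← C_pow, ← mul_assoc, ← C_mul, C_mul_X_pow_eq_monomial]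
    simp only [coeff_monomial]
    rcases eq_or_ne n m with rfl | h
    · simp [mul_comm]
    · simp [Ne.symm h, h]

lemma reflect_eq (p : Polynomial ℂ) (k : ℕ)
    (h : ∀ τ : ℂ, τ ≠ 0 → p.eval τ = τ ^ k * p.eval τ⁻¹) :
    reflect (p.natDegree + k) p = X ^ p.natDegree * p := by
  set N := p.natDegree + k with hN
  have key : ∀ s : ℂ, s ≠ 0 → (reflect N p).eval s = s ^ p.natDegree * p.eval s := by
    intro s hs
    have hinv : Invertible s⁻¹ := invertibleOfNonzero (inv_ne_zero hs)
    have h1 : (reflect N p).eval (⅟ s⁻¹) * (s⁻¹) ^ N = p.eval s⁻¹ :=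
      eval₂_reflect_mul_pow (RingHom.id ℂ) s⁻¹ N p (by omega)
    rw [invOf_eq_inv, inv_inv] at h1
    have hps := h s hs
    have h2 : p.eval s⁻¹ = p.eval s / s ^ k := by
      field_simp [hps]
      rw [hps, one_div]; ring
    rw [h2] at h1
    have hsN : (s : ℂ) ^ N ≠ 0 := pow_ne_zero _ hs
    have hk : (s : ℂ) ^ k ≠ 0 := pow_ne_zero _ hs
    field_simp at h1
    rw [hN, pow_add] at h1
    have h3 : (reflect N p).eval s * s ^ k = s ^ p.natDegree * p.eval s * s ^ k := by
      rw [← h1, ← hN]; simp only [one_div, inv_pow]; field_simp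
    exact mul_right_cancel₀ hk h3
  have h0 : reflect N p - X ^ p.natDegree * p = 0 := by
    apply Polynomial.eq_zero_of_infinite_isRoot
    apply Set.Infinite.mono (s := {x : ℂ | x ≠ 0})
    · intro x hx
      simp only [Set.mem_setOf_eq, IsRoot.def, eval_sub, eval_mul, eval_pow, eval_X]
      rw [key x hx]; ring
    · exact Set.infinite_of_finite_compl (by simp)
  linear_combination h0

lemma coeff_facts (p : Polynomial ℂ) (k : ℕ)
    (h : ∀ τ : ℂ, τ ≠ 0 → p.eval τ = τ ^ k * p.eval τ⁻¹) :
    (∀ n, k < n → p.coeff n = 0) ∧ (∀ n, n ≤ k → p.coeff n = p.coeff (k - n)) := by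
  have hr := reflect_eq p k h
  set N := p.natDegree + k with hN
  constructor
  · intro n hn
    rcases le_or_gt n N with hnN | hnN
    · have hj : N - n ≤ N := by omega
      have := congrArg (fun q => q.coeff (N - n)) hr
      simp only [coeff_reflect, revAt_le hj] at this
      rw [show N - (N - n) = n by omega] at this
      rw [this, X_pow_mul, coeff_mul_X_pow']
      have : ¬ p.natDegree ≤ N - n := by omega
      simp [this]
    · exact coeff_eq_zero_of_natDegree_lt (by omega)
  · intro n hn
    have hj : N - n ≤ N := by omega
    have := congrArg (fun q => q.coeff (N - n)) hr
    simp only [coeff_reflect, revAt_le hj] at this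
    rw [show N - (N - n) = n by omega] at this
    rw [this, X_pow_mul, coeff_mul_X_pow']
    have hd : p.natDegree ≤ N - n := by omega
    rw [if_pos hd, show N - n - p.natDegree = k - n by omega]

theorem stmt13 (A B : Polynomial ℂ) (i : ℂ) (hi : i ^ 2 = -1) :
    (A.comp (C i * X) = A ∧ B.comp (C i * X) = -B ∧
      (∀ τ : ℂ, τ ≠ 0 → A.eval τ = τ ^ 8 * A.eval τ⁻¹) ∧
      (∀ τ : ℂ, τ ≠ 0 → B.eval τ = τ ^ 12 * B.eval τ⁻¹)) ↔
    (∃ a b c d : ℂ, A = C a * (X ^ 8 + 1) + C b * X ^ 4 ∧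
      B = C c * (X ^ 10 + X ^ 2) + C d * X ^ 6) := by
  have h4 : i ^ 4 = 1 := by
    rw [show (4:ℕ) = 2*2 from rfl, pow_mul, hi]; norm_num
  have h6 : i ^ 6 = -1 := by
    rw [show (6:ℕ) = 2*3 from rfl, pow_mul, hi]; norm_num
  have h8 : i ^ 8 = 1 := by
    rw [show (8:ℕ) = 2*4 from rfl, pow_mul, hi]; norm_num
  have h10 : i ^ 10 = -1 := by
    rw [show (10:ℕ) = 2*5 from rfl, pow_mul, hi]; norm_num
  have hmod : ∀ n : ℕ, i ^ n = i ^ (n % 4) := by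
    intro n
    conv_lhs => rw [← Nat.div_add_mod n 4, pow_add, pow_mul, h4, one_pow, one_mul]
  have hne1 : i ≠ 1 := by
    intro h; rw [h] at hi; norm_num at hi
  have hnem1 : i ≠ -1 := by
    intro h; rw [h] at hi; norm_num at hi
  constructor
  · rintro ⟨hA, hB, hAe, hBe⟩
    have hAc : ∀ n : ℕ, i ^ n * A.coeff n = A.coeff n := by
      intro n
      have := congrArg (fun q => q.coeff n) hA
      rw [mul_comm]; simpa [coeff_comp_CiX] using this
    have hBc : ∀ n : ℕ, i ^ n * B.coeff n = -B.coeff n := by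
      intro n
      have := congrArg (fun q => q.coeff n) hB
      rw [mul_comm]; simpa [coeff_comp_CiX] using this
    have hA0 : ∀ n : ℕ, n % 4 ≠ 0 → A.coeff n = 0 := by
      intro n hn
      have hc := hAc n
      rw [hmod] at hc
      have : (i ^ (n % 4) - 1) * A.coeff n = 0 := by linear_combination hc
      rcases mul_eq_zero.1 this with h | h
      · exfalso
        have hb : n % 4 < 4 := Nat.mod_lt _ (by norm_num)
        interval_cases hnm : (n % 4)
        · exact hn rfl
        · exact hne1 (by linear_combination h)
        · rw [hi] at h; norm_num at h
        · apply hnem1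
          have : i^3 = 1 := by linear_combination h
          have h2 : i * i ^ 2 = 1 := by rw [← this]; ring
          rw [hi] at h2
          linear_combination -h2
      · exact h
    have hB0 : ∀ n : ℕ, n % 4 ≠ 2 → B.coeff n = 0 := by
      intro n hn
      have hc := hBc n
      rw [hmod] at hc
      have : (i ^ (n % 4) + 1) * B.coeff n = 0 := by linear_combination hc
      rcases mul_eq_zero.1 this with h | h
      · exfalso
        have hb : n % 4 < 4 := Nat.mod_lt _ (by norm_num)
        interval_cases hnm : (n % 4)
        · norm_num at h
        · exact hnem1 (by linear_combination h)
        · exact hn rfl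
        · exact hne1 (by linear_combination i * hi - h)
      · exact h
    obtain ⟨hAhigh, hAsym⟩ := coeff_facts A 8 hAe
    obtain ⟨hBhigh, hBsym⟩ := coeff_facts B 12 hBe
    refine ⟨A.coeff 0, A.coeff 4, B.coeff 2, B.coeff 6, ?_, ?_⟩
    · ext n
      simp only [coeff_add, coeff_C_mul, coeff_X_pow, coeff_one, mul_add]
      rcases eq_or_ne n 0 with rfl | h0
      · norm_num
      rcases eq_or_ne n 4 with rfl | hn4
      · norm_num
      rcases eq_or_ne n 8 with rfl | hn8
      · have h := hAsym 0 (by norm_num)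
        norm_num at h ⊢
        exact h.symm
      · simp only [h0, hn4, hn8, if_false]
        rcases lt_or_ge 8 n with hgt | hle
        · rw [hAhigh n hgt]; ring
        · rw [hA0 n (by omega)]; ring
    · ext n
      simp only [coeff_add, coeff_C_mul, coeff_X_pow, mul_add]
      rcases eq_or_ne n 2 with rfl | h2
      · norm_num
      rcases eq_or_ne n 6 with rfl | hn6
      · norm_num
      rcases eq_or_ne n 10 with rfl | hn10
      · have h := hBsym 2 (by norm_num)
        norm_num at h ⊢
        exact h.symm
      · simp only [h2, hn6, hn10, if_false]
        rcases lt_or_ge 12 n with hgt | hle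
        · rw [hBhigh n hgt]; ring
        · rw [hB0 n (by omega)]; ring
  · rintro ⟨a, b, c, d, rfl, rfl⟩
    refine ⟨?_, ?_, ?_, ?_⟩
    · simp only [add_comp, mul_comp, pow_comp, C_comp, X_comp, one_comp, mul_pow, ← C_pow, h8, h4]
      simp
    · simp only [add_comp, mul_comp, pow_comp, C_comp, X_comp, one_comp, mul_pow, ← C_pow, h10, hi, h6]
      simp; ring
    · intro τ hτ
      simp only [eval_add, eval_mul, eval_pow, eval_C, eval_X, eval_one]
      field_simp
      ring
    · intro τ hτ
      simp only [eval_add, eval_mul, eval_pow, eval_C, eval_X, eval_one]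
      field_simp
      ring
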